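/- The subgroup of the symmetric group S_12 (on {0,...,11}) generated by the 12-cycle ζ = (0 1 2 ... 11) and the three involutions β_1 = (1 11)(2 10)(3 9)(4 8)(5 7), β_2 = (1 7)(3 9)(5 11), β_3 = (1 5)(2 10)(4 8)(7 11) has order 48, has ⟨ζ⟩ as a normal subgroup, and the quotient by ⟨ζ⟩ is isomorphic to the Klein four-group C_2 × C_2. -/

import Mathlib

namespace Stmt4Aux

open Fin.CommRing

abbrev P12 := Equiv.Perm (Fin 12)

def z : P12 := c[0, 1, 2, 3, 4, 5, 6, 7, 8, 9, 10, 11]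
def b1 : P12 := c[1, 11] * c[2, 10] * c[3, 9] * c[4, 8] * c[5, 7]
def b2 : P12 := c[1, 7] * c[3, 9] * c[5, 11]
def b3 : P12 := c[1, 5] * c[2, 10] * c[4, 8] * c[7, 11]

def isU (u : Fin 12) : Prop := u = 1 ∨ u = 5 ∨ u = 7 ∨ u = 11

instance : DecidablePred isU := fun u => by unfold isU; infer_instance

lemma usq : ∀ u : Fin 12, isU u → u * u = 1 := by decide
lemma umul : ∀ u w : Fin 12, isU u → isU w → isU (u * w) := by decide

def S : Subgroup P12 where
  carrier := {σ | isU (σ 1 - σ 0) ∧ ∀ x, σ x = (σ 1 - σ 0) * x + σ 0}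
  one_mem' := by constructor <;> simp [isU]
  mul_mem' := by
    rintro σ τ ⟨hu, hx⟩ ⟨hw, hy⟩
    have key : ∀ x, (σ * τ) x = ((σ 1 - σ 0) * (τ 1 - τ 0)) * x + ((σ 1 - σ 0) * (τ 0) + σ 0) := by
      intro x
      rw [Equiv.Perm.mul_apply, hx (τ x), hy x]
      ring
    have h0 : (σ * τ) 0 = (σ 1 - σ 0) * (τ 0) + σ 0 := by rw [key 0]; ring
    have hd : (σ * τ) 1 - (σ * τ) 0 = (σ 1 - σ 0) * (τ 1 - τ 0) := by
      rw [key 1, key 0]; ring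
    exact ⟨hd ▸ umul _ _ hu hw, fun x => by rw [hd, h0, key x]⟩
  inv_mem' := by
    rintro σ ⟨hu, hx⟩
    have husq := usq _ hu
    have hform : ∀ x, σ⁻¹ x = (σ 1 - σ 0) * x - (σ 1 - σ 0) * σ 0 := by
      intro x
      rw [Equiv.Perm.inv_eq_iff_eq, hx ((σ 1 - σ 0) * x - (σ 1 - σ 0) * σ 0)]
      calc x = ((σ 1 - σ 0) * (σ 1 - σ 0)) * x - ((σ 1 - σ 0) * (σ 1 - σ 0)) * σ 0 + σ 0 := by
              rw [husq]; ring
        _ = _ := by ring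
    have hd : σ⁻¹ 1 - σ⁻¹ 0 = σ 1 - σ 0 := by rw [hform 1, hform 0]; ring
    refine ⟨hd ▸ hu, fun x => ?_⟩
    rw [hd, hform x, hform 0]; ring

lemma mem_S_iff (σ : P12) :
    σ ∈ S ↔ isU (σ 1 - σ 0) ∧ ∀ x, σ x = (σ 1 - σ 0) * x + σ 0 := Iff.rfl

def GG : Subgroup P12 := Subgroup.closure {z, b1, b2, b3}
def HH : Subgroup P12 := Subgroup.zpowers z

lemma z_apply : ∀ x : Fin 12, z x = x + 1 := by decide
lemma b1_apply : ∀ x : Fin 12, b1 x = 11 * x := by decide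
lemma b2_apply : ∀ x : Fin 12, b2 x = 7 * x := by decide
lemma b3_apply : ∀ x : Fin 12, b3 x = 5 * x := by decide

lemma zpow_apply (n : ℕ) : ∀ x : Fin 12, (z ^ n) x = x + (n : Fin 12) := by
  induction n with
  | zero => intro x; simp
  | succ n ih =>
    intro x
    rw [pow_succ', Equiv.Perm.mul_apply, z_apply, ih x]
    push_cast
    ring

lemma z_mem_GG : z ∈ GG := Subgroup.subset_closure (by simp)
lemma b1_mem_GG : b1 ∈ GG := Subgroup.subset_closure (by simp)
lemma b2_mem_GG : b2 ∈ GG := Subgroup.subset_closure (by simp)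
lemma b3_mem_GG : b3 ∈ GG := Subgroup.subset_closure (by simp)

lemma GG_le_S : GG ≤ S := by
  rw [GG, Subgroup.closure_le]
  rintro g hg
  simp only [Set.mem_insert_iff, Set.mem_singleton_iff] at hg
  rcases hg with rfl | rfl | rfl | rfl <;> rw [SetLike.mem_coe, mem_S_iff] <;> constructor <;> decide

lemma affine_mem_GG (u a : Fin 12) (hu : isU u) (σ : P12) (hσ : ∀ x, σ x = u * x + a) : σ ∈ GG := by
  have key : ∀ μ : P12, μ ∈ GG → (∀ x, μ x = u * x) → σ ∈ GG := by
    intro μ hμG hμ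
    have : σ = z ^ (a.val) * μ := by
      ext x
      rw [Equiv.Perm.mul_apply, zpow_apply, hμ, hσ, Fin.cast_val_eq_self]
    rw [this]
    exact mul_mem (pow_mem z_mem_GG _) hμG
  rcases hu with rfl | rfl | rfl | rfl
  · exact key 1 (one_mem _) (by intro x; simp)
  · exact key b3 b3_mem_GG b3_apply
  · exact key b2 b2_mem_GG b2_apply
  · exact key b1 b1_mem_GG b1_apply

lemma S_le_GG : S ≤ GG := by
  rintro σ ⟨hu, hx⟩
  have h0 : σ 0 = (σ 1 - σ 0) * 0 + σ 0 := by ring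
  exact affine_mem_GG _ (σ 0) hu σ hx

lemma GG_eq_S : GG = S := le_antisymm GG_le_S S_le_GG

def affPerm (u a : Fin 12) (hu : isU u) : P12 where
  toFun x := u * x + a
  invFun x := u * x - u * a
  left_inv x := by
    simp only
    calc u * (u * x + a) - u * a = (u * u) * x := by ring
      _ = x := by rw [usq u hu]; ring
  right_inv x := by
    simp only
    calc u * (u * x - u * a) + a = (u * u) * x - (u * u) * a + a := by ring
      _ = x := by rw [usq u hu]; ring

lemma affPerm_apply (u a : Fin 12) (hu : isU u) (x : Fin 12) : affPerm u a hu x = u * x + a := rfl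

lemma affPerm_mem_S (u a : Fin 12) (hu : isU u) : affPerm u a hu ∈ S := by
  rw [mem_S_iff]
  have hd : affPerm u a hu 1 - affPerm u a hu 0 = u := by
    rw [affPerm_apply, affPerm_apply]; ring
  rw [hd]
  refine ⟨hu, fun x => ?_⟩
  rw [affPerm_apply, affPerm_apply]; ring

def T := {p : Fin 12 × Fin 12 // isU (p.2 - p.1)}

instance : Fintype T := by unfold T; infer_instance

def eST : T ≃ S where
  toFun t := ⟨affPerm (t.1.2 - t.1.1) t.1.1 t.2, affPerm_mem_S _ _ t.2⟩
  invFun σ := ⟨(σ.1 0, σ.1 1), σ.2.1⟩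
  left_inv t := by
    apply Subtype.ext
    have h0 : affPerm (t.1.2 - t.1.1) t.1.1 t.2 0 = t.1.1 := by rw [affPerm_apply]; ring
    have h1 : affPerm (t.1.2 - t.1.1) t.1.1 t.2 1 = t.1.2 := by rw [affPerm_apply]; ring
    exact Prod.ext h0 h1
  right_inv σ := by
    apply Subtype.ext
    apply Equiv.ext
    intro x
    have hd : σ.1 1 - σ.1 0 = (σ.1 : P12) 1 - (σ.1 : P12) 0 := rfl
    rw [affPerm_apply]
    exact (σ.2.2 x).symm

lemma card_S : Nat.card S = 48 := by
  rw [Nat.card_congr eST.symm, Nat.card_eq_fintype_card]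
  decide

lemma card_GG : Nat.card GG = 48 := by rw [GG_eq_S]; exact card_S

def k (d : Fin 12) : Multiplicative (ZMod 2) × Multiplicative (ZMod 2) :=
  (Multiplicative.ofAdd (if d = 7 ∨ d = 11 then (1 : ZMod 2) else 0),
   Multiplicative.ofAdd (if d = 5 ∨ d = 11 then (1 : ZMod 2) else 0))

lemma kmul : ∀ u w : Fin 12, isU u → isU w → k (u * w) = k u * k w := by decide
lemma k_one : k 1 = 1 := by decide
lemma k_eq_one : ∀ u : Fin 12, isU u → (k u = 1 ↔ u = 1) := by decide
lemma ksurj : ∀ y : Multiplicative (ZMod 2) × Multiplicative (ZMod 2),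
    y = k 1 ∨ y = k 5 ∨ y = k 7 ∨ y = k 11 := by decide

def fhom : GG →* Multiplicative (ZMod 2) × Multiplicative (ZMod 2) where
  toFun σ := k ((σ : P12) 1 - (σ : P12) 0)
  map_one' := by
    show k (((1 : GG) : P12) 1 - ((1 : GG) : P12) 0) = 1
    have : ((1 : GG) : P12) 1 - ((1 : GG) : P12) 0 = 1 := by simp
    rw [this, k_one]
  map_mul' σ τ := by
    obtain ⟨hu, hx⟩ := GG_le_S σ.2
    obtain ⟨hw, hy⟩ := GG_le_S τ.2
    have hd : ((σ * τ : GG) : P12) 1 - ((σ * τ : GG) : P12) 0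
        = ((σ : P12) 1 - (σ : P12) 0) * ((τ : P12) 1 - (τ : P12) 0) := by
      show (σ : P12) ((τ : P12) 1) - (σ : P12) ((τ : P12) 0) = _
      rw [hx ((τ : P12) 1), hx ((τ : P12) 0)]
      ring
    show k (((σ * τ : GG) : P12) 1 - ((σ * τ : GG) : P12) 0)
        = k ((σ : P12) 1 - (σ : P12) 0) * k ((τ : P12) 1 - (τ : P12) 0)
    rw [hd]
    exact kmul _ _ hu hw

lemma d_zpow_mem (σ : P12) (hσ : σ ∈ HH) : σ 1 - σ 0 = 1 := by
  obtain ⟨n, rfl⟩ := mem_powers_iff_mem_zpowers.2 hσ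
  rw [zpow_apply, zpow_apply]
  ring

lemma fhom_ker : fhom.ker = HH.subgroupOf GG := by
  ext σ
  obtain ⟨hu, hx⟩ := GG_le_S σ.2
  rw [MonoidHom.mem_ker, Subgroup.mem_subgroupOf]
  show k _ = 1 ↔ _
  rw [k_eq_one _ hu]
  constructor
  · intro h1
    have : (σ : P12) = z ^ ((σ : P12) 0).val := by
      ext x
      rw [zpow_apply, hx x, h1, Fin.cast_val_eq_self]
      ring_nf
    rw [HH, this]
    exact pow_mem (Subgroup.mem_zpowers z) _
  · intro h
    exact d_zpow_mem _ h

lemma fhom_surj : Function.Surjective fhom := by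
  intro y
  have h1 : fhom ⟨1, one_mem _⟩ = k 1 := by
    show k _ = _
    congr 1
  have h5 : fhom ⟨b3, b3_mem_GG⟩ = k 5 := by
    show k (b3 1 - b3 0) = k 5
    decide
  have h7 : fhom ⟨b2, b2_mem_GG⟩ = k 7 := by
    show k (b2 1 - b2 0) = k 7
    decide
  have h11 : fhom ⟨b1, b1_mem_GG⟩ = k 11 := by
    show k (b1 1 - b1 0) = k 11
    decide
  rcases ksurj y with h | h | h | h
  · exact ⟨_, (h1.trans h.symm)⟩
  · exact ⟨_, (h5.trans h.symm)⟩
  · exact ⟨_, (h7.trans h.symm)⟩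
  · exact ⟨_, (h11.trans h.symm)⟩

lemma HH_le_GG : HH ≤ GG := Subgroup.zpowers_le.2 z_mem_GG

lemma normalHH : (HH.subgroupOf GG).Normal := fhom_ker ▸ fhom.normal_ker

end Stmt4Aux

/-- Aut(M₃): the group generated by the 12-cycle ζ and the involutions
β₁ = (1 11)(2 10)(3 9)(4 8)(5 7), β₂ = (1 7)(3 9)(5 11),
β₃ = (1 5)(2 10)(4 8)(7 11) has order 48, has ⟨ζ⟩ as a normal subgroup,
and the quotient by ⟨ζ⟩ is the Klein four-group C₂ × C₂. -/
theorem stmt_4 :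
    let ζ : Equiv.Perm (Fin 12) := c[0, 1, 2, 3, 4, 5, 6, 7, 8, 9, 10, 11]
    let β₁ : Equiv.Perm (Fin 12) := c[1, 11] * c[2, 10] * c[3, 9] * c[4, 8] * c[5, 7]
    let β₂ : Equiv.Perm (Fin 12) := c[1, 7] * c[3, 9] * c[5, 11]
    let β₃ : Equiv.Perm (Fin 12) := c[1, 5] * c[2, 10] * c[4, 8] * c[7, 11]
    let G : Subgroup (Equiv.Perm (Fin 12)) := Subgroup.closure {ζ, β₁, β₂, β₃}
    let H : Subgroup (Equiv.Perm (Fin 12)) := Subgroup.zpowers ζ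
    Nat.card G = 48 ∧ H ≤ G ∧ (H.subgroupOf G).Normal ∧
    ∃ f : G →* Multiplicative (ZMod 2) × Multiplicative (ZMod 2),
      Function.Surjective f ∧ f.ker = H.subgroupOf G := by
  intro ζ β₁ β₂ β₃ G H
  exact ⟨Stmt4Aux.card_GG, Stmt4Aux.HH_le_GG, Stmt4Aux.normalHH,
    Stmt4Aux.fhom, Stmt4Aux.fhom_surj, Stmt4Aux.fhom_ker⟩
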